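/- Let n ≥ 2 and θ ∈ ℝ. The function Φ_θ(x) := ∑_{k=0}^∞ [(-θ)_k (n/2-1-θ)_k / ((n/2)_k (1)_k)] |x|^{2k} is bounded on 𝔹 if and only if θ > -1/2. -/

import Mathlib

open MeasureTheory
open scoped BigOperators ENNReal Classical

noncomputable section

/-- Euclidean space `ℝⁿ`. -/
abbrev E (n : ℕ) := EuclideanSpace ℝ (Fin n)

/-- The open unit ball of `ℝⁿ`. -/
def unitBall (n : ℕ) : Set (E n) := Metric.ball 0 1

/-- The Laplacian `Δf = ∑ ∂²f/∂xᵢ²`. -/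
def lap {n : ℕ} (f : E n → ℂ) (x : E n) : ℂ :=
  ∑ i : Fin n,
    fderiv ℝ (fun y => fderiv ℝ f y (EuclideanSpace.single i 1)) x (EuclideanSpace.single i 1)

/-- The `N`-th iterate `Δ^N` of the Laplacian. -/
def lapIter {n : ℕ} (N : ℕ) (f : E n → ℂ) : E n → ℂ := lap^[N] f

/-- The radial derivative `R[u](x) = x ⋅ ∇u(x)`. -/
def radialDeriv {n : ℕ} (f : E n → ℂ) (x : E n) : ℂ := fderiv ℝ f x x

/-- The operator `L_θ[u] = (1-|x|²) Δu + 4θ R[u] + 2θ(n-2-2θ) u`. -/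
def Lop {n : ℕ} (θ : ℝ) (f : E n → ℂ) (x : E n) : ℂ :=
  ((1 - ‖x‖ ^ 2 : ℝ) : ℂ) * lap f x + ((4 * θ : ℝ) : ℂ) * radialDeriv f x
    + ((2 * θ * ((n : ℝ) - 2 - 2 * θ) : ℝ) : ℂ) * f x

/-- The multiplication operator `M^j[u](x) = (1-|x|²)^j u(x)` for integer `j`. -/
def Mnat {n : ℕ} (j : ℕ) (f : E n → ℂ) (x : E n) : ℂ :=
  (((1 - ‖x‖ ^ 2) ^ j : ℝ) : ℂ) * f x

/-- The multiplication operator `M^λ[u](x) = (1-|x|²)^λ u(x)` for real `λ`. -/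
def Mr {n : ℕ} (lam : ℝ) (f : E n → ℂ) (x : E n) : ℂ :=
  (((1 - ‖x‖ ^ 2) ^ lam : ℝ) : ℂ) * f x

/-- `u` is `N`-harmonic on the unit ball: `u` is `C^{2N}` there and `Δ^N u = 0`. -/
def NHarm (n N : ℕ) (u : E n → ℂ) : Prop :=
  ContDiffOn ℝ (2 * N : ℕ) u (unitBall n) ∧ ∀ x ∈ unitBall n, lapIter N u x = 0

/-- `‖u‖_{p,α}^p = ∫_𝔹 |u|^p (1-|x|²)^α dV`, as a lower integral. -/
def wInt (n : ℕ) (p α : ℝ) (u : E n → ℂ) : ℝ≥0∞ :=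
  ∫⁻ x in unitBall n, ENNReal.ofReal (‖u x‖ ^ p * (1 - ‖x‖ ^ 2) ^ α)

/-- Membership in `PH^p_{N,α}(𝔹)`. -/
def memPH (n N : ℕ) (p α : ℝ) (u : E n → ℂ) : Prop :=
  NHarm n N u ∧ wInt n p α u < ⊤

/-- The quantities `b_{j,N}(p)`. -/
def bCoef (n N j : ℕ) (p : ℝ) : ℝ :=
  if j = 0 then -1 - ((N : ℝ) - 1) * p
  else max (-1 - ((N : ℝ) + (j : ℝ) - 1) * p) (-(n : ℝ) - ((N : ℝ) - (j : ℝ) - (n : ℝ) + 1) * p)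

/-- The quantities `a_{j,N}(p)`. -/
def aCoef (n N j : ℕ) (p : ℝ) : ℝ :=
  min (bCoef n N j p) (-1 - ((N : ℝ) - (j : ℝ)) * p)

end

/-- The radial hypergeometric function
`Φ_θ(x) = ₂F₁(-θ, n/2-1-θ; n/2; |x|²)`, given by its power series. -/
noncomputable def Phi (n : ℕ) (θ : ℝ) (x : E n) : ℝ :=
  ∑' k : ℕ,
    ((ascPochhammer ℝ k).eval (-θ) * (ascPochhammer ℝ k).eval ((n : ℝ) / 2 - 1 - θ)) /
        ((ascPochhammer ℝ k).eval ((n : ℝ) / 2) * (ascPochhammer ℝ k).eval 1) *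
      ‖x‖ ^ (2 * k)

namespace S11

open Filter Finset

/-- The `k`-th Taylor coefficient of `Φ_θ`. -/
noncomputable def pc (n : ℕ) (θ : ℝ) (k : ℕ) : ℝ :=
  ((ascPochhammer ℝ k).eval (-θ) * (ascPochhammer ℝ k).eval ((n : ℝ) / 2 - 1 - θ)) /
    ((ascPochhammer ℝ k).eval ((n : ℝ) / 2) * (ascPochhammer ℝ k).eval 1)

/-- The ratio of consecutive coefficients. -/
noncomputable def qq (n : ℕ) (θ : ℝ) (k : ℕ) : ℝ :=
  ((k : ℝ) - θ) * ((k : ℝ) + ((n : ℝ) / 2 - 1 - θ)) / (((k : ℝ) + (n : ℝ) / 2) * ((k : ℝ) + 1))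

lemma pc_zero (n : ℕ) (θ : ℝ) : pc n θ 0 = 1 := by simp [pc]

lemma pc_succ (n : ℕ) (θ : ℝ) (k : ℕ) :
    pc n θ (k + 1) = pc n θ k * qq n θ k := by
  have key : ∀ P Q R S x y z w : ℝ,
      (P * x) * (Q * y) / ((R * z) * (S * w)) = P * Q / (R * S) * (x * y / (z * w)) := by
    intro P Q R S x y z w
    rw [mul_mul_mul_comm P x Q y, mul_mul_mul_comm R z S w, mul_div_mul_comm]
  simp only [pc, qq, ascPochhammer_succ_right, Polynomial.eval_mul, Polynomial.eval_add,
    Polynomial.eval_X, Polynomial.eval_natCast]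
  rw [key]
  ring_nf

lemma den_pos (n : ℕ) (hn : 2 ≤ n) (k : ℕ) :
    0 < ((k : ℝ) + (n : ℝ) / 2) * ((k : ℝ) + 1) := by
  have h1 : (1:ℝ) ≤ (n:ℝ)/2 := by
    have : (2:ℝ) ≤ (n:ℝ) := by exact_mod_cast hn
    linarith
  have h0 : (0:ℝ) ≤ (k:ℝ) := Nat.cast_nonneg k
  positivity

lemma qq_le_one_add (n : ℕ) (hn : 2 ≤ n) (θ ε : ℝ) (hε : 0 < ε) :
    ∃ K : ℕ, ∀ k : ℕ, K ≤ k → qq n θ k ≤ 1 + ε := by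
  obtain ⟨K, hK⟩ := exists_nat_ge
    ((|2 + 2*θ| + |(1+ε)*((n:ℝ)/2) + θ*((n:ℝ)/2 - 1 - θ)|) / ε)
  refine ⟨K + 1, fun k hk => ?_⟩
  have hk' : (K:ℝ) + 1 ≤ (k:ℝ) := by exact_mod_cast hk
  have hk1 : (1:ℝ) ≤ (k:ℝ) := by
    have : (0:ℝ) ≤ (K:ℝ) := Nat.cast_nonneg K
    linarith
  have hB : |2 + 2*θ| + |(1+ε)*((n:ℝ)/2) + θ*((n:ℝ)/2 - 1 - θ)| ≤ ε * ((k:ℝ) - 1) := by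
    rw [div_le_iff₀ hε] at hK
    nlinarith
  have hd := den_pos n hn k
  rw [qq, div_le_iff₀ hd]
  have e1 : -(|2 + 2*θ|) * (k:ℝ) ≤ (2 + 2*θ) * (k:ℝ) :=
    mul_le_mul_of_nonneg_right (neg_abs_le _) (by linarith)
  have e2 : -(|(1+ε)*((n:ℝ)/2) + θ*((n:ℝ)/2 - 1 - θ)|)
      ≤ (1+ε)*((n:ℝ)/2) + θ*((n:ℝ)/2 - 1 - θ) := neg_abs_le _
  have hc1 : (1:ℝ) ≤ (n:ℝ)/2 := by
    have : (2:ℝ) ≤ (n:ℝ) := by exact_mod_cast hn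
    linarith
  nlinarith [mul_le_mul_of_nonneg_right hB (by linarith : (0:ℝ) ≤ (k:ℝ)),
    mul_nonneg (abs_nonneg ((1+ε)*((n:ℝ)/2) + θ*((n:ℝ)/2 - 1 - θ)))
      (by linarith : (0:ℝ) ≤ (k:ℝ) - 1),
    mul_nonneg (mul_nonneg hε.le (by linarith : (0:ℝ) ≤ (n:ℝ)/2 + 1))
      (by linarith : (0:ℝ) ≤ (k:ℝ))]

lemma qq_bound_half (n : ℕ) (hn : 2 ≤ n) (θ : ℝ) (hθ : -(1/2 : ℝ) < θ) :
    ∃ K : ℕ, 1 ≤ K ∧ ∀ k : ℕ, K ≤ k →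
      (0 ≤ (k:ℝ) - θ ∧ 0 ≤ (k:ℝ) + ((n:ℝ)/2 - 1 - θ)) ∧
      qq n θ k ≤ 1 - (θ + 3/2) / ((k:ℝ) + 1) := by
  have hδ0 : (0:ℝ) < θ + 1/2 := by linarith
  obtain ⟨K, hK⟩ := exists_nat_ge
    (max (|((n:ℝ)/2)*(1-(θ+3/2)) + θ*((n:ℝ)/2 - 1 - θ)| / (θ+1/2)) (|θ| + 1))
  refine ⟨K + 1, le_add_self, fun k hk => ?_⟩
  have hk' : (K:ℝ) + 1 ≤ (k:ℝ) := by exact_mod_cast hk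
  have hKθ : |θ| + 1 ≤ (K:ℝ) := le_trans (le_max_right _ _) hK
  have hθk : θ ≤ (k:ℝ) - 1 := by
    have := le_abs_self θ; linarith
  have hc1 : (1:ℝ) ≤ (n:ℝ)/2 := by
    have : (2:ℝ) ≤ (n:ℝ) := by exact_mod_cast hn
    linarith
  have hpos1 : 0 ≤ (k:ℝ) - θ := by linarith
  have hpos2 : 0 ≤ (k:ℝ) + ((n:ℝ)/2 - 1 - θ) := by linarith
  refine ⟨⟨hpos1, hpos2⟩, ?_⟩
  have hD : |((n:ℝ)/2)*(1-(θ+3/2)) + θ*((n:ℝ)/2 - 1 - θ)| ≤ (θ+1/2) * (k:ℝ) := by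
    have h1 := le_trans (le_max_left _ _) hK
    rw [div_le_iff₀ hδ0] at h1
    nlinarith
  have hd := den_pos n hn k
  rw [qq, div_le_iff₀ hd]
  have e2 : -(|((n:ℝ)/2)*(1-(θ+3/2)) + θ*((n:ℝ)/2 - 1 - θ)|)
      ≤ ((n:ℝ)/2)*(1-(θ+3/2)) + θ*((n:ℝ)/2 - 1 - θ) := neg_abs_le _
  have expand : (1 - (θ+3/2) / ((k:ℝ)+1)) * (((k:ℝ)+(n:ℝ)/2)*((k:ℝ)+1))
      = ((k:ℝ)+(n:ℝ)/2)*((k:ℝ)+1-(θ+3/2)) := by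
    field_simp
  rw [expand]
  nlinarith

lemma summable_abs_pc (n : ℕ) (hn : 2 ≤ n) (θ : ℝ) (hθ : -(1/2 : ℝ) < θ) :
    Summable (fun k => |pc n θ k|) := by
  have hs1 : (1:ℝ) ≤ θ + 3/2 := by linarith
  have hs1' : (1:ℝ) < θ + 3/2 := by linarith
  obtain ⟨K, hK1, hK⟩ := qq_bound_half n hn θ hθ
  have hKpos : (0:ℝ) < (K:ℝ) := by exact_mod_cast hK1
  set A : ℝ := |pc n θ K| * (K:ℝ) ^ (θ + 3/2 : ℝ) with hA
  have hA0 : 0 ≤ A := mul_nonneg (abs_nonneg _) (Real.rpow_pos_of_pos hKpos _).le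
  have claim : ∀ k, K ≤ k → |pc n θ k| ≤ A * ((k:ℝ) ^ (θ + 3/2 : ℝ))⁻¹ := by
    intro k hk
    induction k, hk using Nat.le_induction with
    | base =>
      rw [hA, mul_assoc, mul_inv_cancel₀ (Real.rpow_pos_of_pos hKpos _).ne', mul_one]
    | succ k hk ih =>
      have hkpos : (0:ℝ) < (k:ℝ) := lt_of_lt_of_le hKpos (by exact_mod_cast hk)
      obtain ⟨⟨hp1, hp2⟩, hq⟩ := hK k hk
      have hqnonneg : 0 ≤ qq n θ k :=
        div_nonneg (mul_nonneg hp1 hp2) (den_pos n hn k).le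
      have hber : 1 - (θ + 3/2) * (1/((k:ℝ)+1)) ≤ (1 - 1/((k:ℝ)+1)) ^ (θ + 3/2 : ℝ) := by
        have h1 : (-1 : ℝ) ≤ -(1/((k:ℝ)+1)) := by
          have : 1/((k:ℝ)+1) ≤ 1 := by
            rw [div_le_one (by linarith)]; linarith
          linarith
        have := one_add_mul_self_le_rpow_one_add h1 hs1
        have e : (1 + -(1/((k:ℝ)+1))) = 1 - 1/((k:ℝ)+1) := by ring
        rw [e] at this
        linarith
      have hfrac : (1 : ℝ) - 1/((k:ℝ)+1) = (k:ℝ)/((k:ℝ)+1) := by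
        field_simp
        ring
      have hq2 : qq n θ k ≤ ((k:ℝ)/((k:ℝ)+1)) ^ (θ + 3/2 : ℝ) := by
        rw [← hfrac]
        refine le_trans ?_ hber
        rw [div_eq_mul_one_div (θ + 3/2) ((k:ℝ)+1)] at hq
        linarith [hq]
      have step : |pc n θ (k+1)| ≤ (A * ((k:ℝ) ^ (θ + 3/2 : ℝ))⁻¹) *
          (((k:ℝ)/((k:ℝ)+1)) ^ (θ + 3/2 : ℝ)) := by
        rw [pc_succ, abs_mul, abs_of_nonneg hqnonneg]
        exact mul_le_mul ih hq2 hqnonneg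
          (mul_nonneg hA0 (inv_nonneg.2 (Real.rpow_nonneg hkpos.le _)))
      refine le_trans step (le_of_eq ?_)
      rw [Real.div_rpow hkpos.le (by linarith : (0:ℝ) ≤ (k:ℝ)+1)]
      push_cast
      rw [div_eq_mul_inv]
      have h1 : ((k:ℝ) ^ (θ + 3/2 : ℝ)) ≠ 0 := (Real.rpow_pos_of_pos hkpos _).ne'
      field_simp
  have hg : Summable (fun k : ℕ => A * (((k:ℝ)) ^ (θ + 3/2 : ℝ))⁻¹) :=
    (Real.summable_nat_rpow_inv.mpr hs1').mul_left A
  refine Summable.of_norm_bounded_eventually hg ?_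
  rw [Nat.cofinite_eq_atTop]
  filter_upwards [eventually_ge_atTop K] with k hk
  simpa [Real.norm_eq_abs, abs_abs] using claim k hk

section Case2
variable {n : ℕ} (hn : 2 ≤ n) {θ : ℝ} (hθ : θ ≤ -(1/2 : ℝ))
include hn hθ

omit hθ in
lemma nhalf : (1:ℝ) ≤ (n:ℝ)/2 := by
  have : (2:ℝ) ≤ (n:ℝ) := by exact_mod_cast hn
  linarith

lemma qq_pos (k : ℕ) : 0 < qq n θ k := by
  have h1 := nhalf hn
  have hk : (0:ℝ) ≤ (k:ℝ) := Nat.cast_nonneg k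
  exact div_pos (mul_pos (by linarith) (by linarith)) (den_pos n hn k)

lemma pc_pos : ∀ k, 0 < pc n θ k := by
  intro k
  induction k with
  | zero => rw [pc_zero]; norm_num
  | succ k ih => rw [pc_succ]; exact mul_pos ih (qq_pos hn hθ k)

lemma pc_mono (k : ℕ) : (k:ℝ) * pc n θ k ≤ ((k:ℝ) + 1) * pc n θ (k + 1) := by
  have hd := den_pos n hn k
  have h1 := nhalf hn (n := n)
  have hk : (0:ℝ) ≤ (k:ℝ) := Nat.cast_nonneg k
  have hqk : (k:ℝ) ≤ qq n θ k * ((k:ℝ) + 1) := by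
    rw [qq, div_mul_eq_mul_div, le_div_iff₀ hd]
    nlinarith [mul_nonneg (by linarith : (0:ℝ) ≤ -1 - 2*θ) hk,
      mul_nonneg (by linarith : (0:ℝ) ≤ -θ) (by linarith : (0:ℝ) ≤ (n:ℝ)/2 - 1 - θ)]
  calc (k:ℝ) * pc n θ k ≤ (qq n θ k * ((k:ℝ)+1)) * pc n θ k :=
        mul_le_mul_of_nonneg_right hqk (pc_pos hn hθ k).le
    _ = ((k:ℝ)+1) * pc n θ (k+1) := by rw [pc_succ]; ring

lemma pc_ge (k : ℕ) : pc n θ 1 ≤ ((k:ℝ) + 1) * pc n θ (k + 1) := by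
  induction k with
  | zero => simp
  | succ k ih =>
    refine le_trans ih ?_
    have := pc_mono hn hθ (k+1)
    push_cast at this ⊢
    linarith

lemma pc_sum_unbounded (C : ℝ) :
    ∃ M : ℕ, 1 ≤ M ∧ C + 1 ≤ ∑ k ∈ range M, pc n θ k := by
  have h1 : 0 < pc n θ 1 := pc_pos hn hθ 1
  have lower : ∀ M : ℕ, pc n θ 1 * (∑ i ∈ range M, (1:ℝ)/((i:ℝ)+1)) ≤
      ∑ k ∈ range (M+1), pc n θ k := by
    intro M
    rw [Finset.sum_range_succ', pc_zero, Finset.mul_sum]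
    have : ∀ i ∈ range M, pc n θ 1 * ((1:ℝ)/((i:ℝ)+1)) ≤ pc n θ (i+1) := by
      intro i _
      rw [mul_one_div, div_le_iff₀ (by positivity : (0:ℝ) < (i:ℝ)+1)]
      calc pc n θ 1 ≤ ((i:ℝ)+1) * pc n θ (i+1) := pc_ge hn hθ i
        _ = pc n θ (i+1) * ((i:ℝ)+1) := by ring
    have := Finset.sum_le_sum this
    linarith
  have htend : Tendsto (fun M : ℕ => pc n θ 1 * ∑ i ∈ range M, (1:ℝ)/((i:ℝ)+1))
      atTop atTop := by
    have := Real.tendsto_sum_range_one_div_nat_succ_atTop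
    exact Tendsto.const_mul_atTop h1 (by exact_mod_cast this)
  obtain ⟨M, hM⟩ := (htend.eventually_ge_atTop (C+1)).exists
  exact ⟨M + 1, le_add_self, le_trans hM (lower M)⟩

lemma summable_case2 {r : ℝ} (hr0 : 0 < r) (hr1 : r < 1) :
    Summable (fun k => pc n θ k * r ^ (2*k)) := by
  have hr2 : (0:ℝ) < r^2 := by positivity
  have hε : (0:ℝ) < (1 - r^2)/(2*r^2) := by
    apply div_pos (by nlinarith) (by positivity)
  obtain ⟨K, hK⟩ := qq_le_one_add n hn θ _ hε
  have hρ : (1 + r^2)/2 < 1 := by nlinarith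
  apply summable_of_ratio_norm_eventually_le hρ
  filter_upwards [eventually_ge_atTop K] with k hk
  have hq := hK k hk
  have hpck := pc_pos hn hθ k
  have hrp : (0:ℝ) < r ^ (2*k) := by positivity
  have hρeq : (1 + (1 - r^2)/(2*r^2)) * r^2 = (1 + r^2)/2 := by
    field_simp; ring
  have h2 : qq n θ k * r^2 ≤ (1 + r^2)/2 := by
    calc qq n θ k * r^2 ≤ (1 + (1 - r^2)/(2*r^2)) * r^2 :=
          mul_le_mul_of_nonneg_right hq hr2.le
      _ = (1 + r^2)/2 := hρeq
  have e1 : pc n θ (k+1) * r ^ (2*(k+1)) = (pc n θ k * r ^ (2*k)) * (qq n θ k * r^2) := by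
    rw [pc_succ]
    have h2k : 2*(k+1) = 2*k + 2 := by ring
    rw [h2k, pow_add]
    ring
  rw [Real.norm_eq_abs, Real.norm_eq_abs, e1,
    abs_of_pos (mul_pos (mul_pos hpck hrp) (mul_pos (qq_pos hn hθ k) hr2)),
    abs_of_pos (mul_pos hpck hrp)]
  calc (pc n θ k * r ^ (2*k)) * (qq n θ k * r^2)
      ≤ (pc n θ k * r ^ (2*k)) * ((1 + r^2)/2) :=
        mul_le_mul_of_nonneg_left h2 (mul_pos hpck hrp).le
    _ = (1 + r^2)/2 * (pc n θ k * r ^ (2*k)) := by ring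

end Case2
end S11

/-- `Φ_θ` is bounded on the unit ball iff `θ > -1/2`. -/
theorem stmt11 (n : ℕ) (hn : 2 ≤ n) (θ : ℝ) :
    (∃ C : ℝ, ∀ x ∈ unitBall n, |Phi n θ x| ≤ C) ↔ -(1 / 2 : ℝ) < θ := by
  have hPhi : ∀ x : E n, Phi n θ x = ∑' k : ℕ, S11.pc n θ k * ‖x‖ ^ (2 * k) :=
    fun x => rfl
  constructor
  · rintro ⟨C, hC⟩
    by_contra hθ'
    push_neg at hθ'
    have h0mem : (0 : E n) ∈ unitBall n := by
      simp [unitBall, Metric.mem_ball]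
    have hC0 : 0 ≤ C := le_trans (abs_nonneg _) (hC 0 h0mem)
    obtain ⟨M, hM1, hM⟩ := S11.pc_sum_unbounded hn hθ' C
    have hMr : (1:ℝ) ≤ (M:ℝ) := by exact_mod_cast hM1
    set δ : ℝ := 1/(8*(M:ℝ)*(C+1)) with hδ
    have hδ0 : 0 < δ := by positivity
    have hδ1 : δ ≤ 1/8 := by
      rw [hδ]
      rw [div_le_div_iff₀ (by positivity) (by norm_num)]
      nlinarith
    set r : ℝ := 1 - δ with hrdef
    have hr0 : 0 < r := by rw [hrdef]; linarith
    have hr1 : r < 1 := by rw [hrdef]; linarith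
    have hbern : 1 - 1/(4*(C+1)) ≤ r^(2*M) := by
      have h1 := one_add_mul_le_pow (a := -δ) (by linarith) (2*M)
      have h2 : ((2*M : ℕ) : ℝ) * δ = 1/(4*(C+1)) := by
        push_cast
        rw [hδ]
        field_simp
        ring
      calc 1 - 1/(4*(C+1)) = 1 + ((2*M : ℕ) : ℝ) * (-δ) := by rw [← h2]; push_cast; ring
        _ ≤ (1 + -δ)^(2*M) := h1
        _ = r^(2*M) := by rw [hrdef]; ring_nf
    -- the point x
    have hn0 : 0 < n := by omega
    set x : E n := EuclideanSpace.single (⟨0, hn0⟩ : Fin n) r with hx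
    have hxnorm : ‖x‖ = r := by
      rw [hx, EuclideanSpace.norm_single, Real.norm_eq_abs, abs_of_pos hr0]
    have hxmem : x ∈ unitBall n := by
      simp only [unitBall, Metric.mem_ball, dist_zero_right, hxnorm]
      exact hr1
    have hsum := S11.summable_case2 hn hθ' hr0 hr1
    have hlow : ∑ k ∈ Finset.range M, S11.pc n θ k * r^(2*k) ≤ Phi n θ x := by
      rw [hPhi x, hxnorm]
      exact Summable.sum_le_tsum (Finset.range M)
        (fun k _ => (mul_pos (S11.pc_pos hn hθ' k) (by positivity)).le) hsum
    have hterm : ∀ k ∈ Finset.range M, S11.pc n θ k * r^(2*M) ≤ S11.pc n θ k * r^(2*k) := by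
      intro k hk
      have hkM : k ≤ M := (Finset.mem_range.mp hk).le
      exact mul_le_mul_of_nonneg_left
        (pow_le_pow_of_le_one hr0.le hr1.le (by omega)) (S11.pc_pos hn hθ' k).le
    have hsum2 : r^(2*M) * (∑ k ∈ Finset.range M, S11.pc n θ k) ≤
        ∑ k ∈ Finset.range M, S11.pc n θ k * r^(2*k) := by
      rw [Finset.mul_sum]
      refine Finset.sum_le_sum fun k hk => ?_
      rw [mul_comm]
      exact hterm k hk
    have hfinal : C < Phi n θ x := by
      have e1 : r^(2*M) * (C+1) ≤ r^(2*M) * (∑ k ∈ Finset.range M, S11.pc n θ k) :=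
        mul_le_mul_of_nonneg_left hM (by positivity)
      have e2 : (1 - 1/(4*(C+1))) * (C+1) ≤ r^(2*M) * (C+1) :=
        mul_le_mul_of_nonneg_right hbern (by linarith)
      have e3 : (1 - 1/(4*(C+1))) * (C+1) = C + 3/4 := by
        field_simp
        ring
      linarith
    exact absurd (hC x hxmem) (not_le.mpr (lt_of_lt_of_le hfinal (le_abs_self _)))
  · intro hθ
    have hsum := S11.summable_abs_pc n hn θ hθ
    refine ⟨∑' k, |S11.pc n θ k|, fun x hx => ?_⟩
    have hx1 : ‖x‖ < 1 := by
      simpa [unitBall, Metric.mem_ball, dist_zero_right] using hx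
    have hb : ∀ k : ℕ, |S11.pc n θ k * ‖x‖ ^ (2*k)| ≤ |S11.pc n θ k| := by
      intro k
      rw [abs_mul]
      have h1 : |‖x‖ ^ (2*k)| ≤ 1 := by
        rw [abs_of_nonneg (by positivity)]
        exact pow_le_one₀ (norm_nonneg x) hx1.le
      exact mul_le_of_le_one_right (abs_nonneg _) h1
    have hsx : Summable (fun k => S11.pc n θ k * ‖x‖ ^ (2*k)) :=
      Summable.of_norm_bounded hsum (fun k => by
        rw [Real.norm_eq_abs]; exact hb k)
    rw [hPhi x]
    have step1 : ‖∑' k, S11.pc n θ k * ‖x‖ ^ (2*k)‖ ≤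
        ∑' k, ‖S11.pc n θ k * ‖x‖ ^ (2*k)‖ := by
      apply norm_tsum_le_tsum_norm
      simpa only [Real.norm_eq_abs] using hsx.abs
    rw [Real.norm_eq_abs] at step1
    simp only [Real.norm_eq_abs] at step1
    exact le_trans step1 (Summable.tsum_le_tsum hb hsx.abs hsum)
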